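/- For every p ≥ 1, the function φ_p(w) = ∫_{ℝ²} Ψ_{|·|^p}(x,y,w) · (1/(2π)) e^{−(x²+y²)/2} dx dy is absolutely integrable over ℝ: ∫_ℝ |φ_p(w)| dw < ∞, where Ψ_{|·|^p}(x,y,w) = (|y+w|^p − |x|^p)·1{x−y ≤ w ≤ 0} + (|x−w|^p − |y|^p)·1{0 ≤ w ≤ x−y}. -/

import Mathlib

open MeasureTheory Real Set

/-- `Ψ_{|·|^p}(x, y, w)`. -/
noncomputable def PsiAbsPow (p : ℕ) (x y w : ℝ) : ℝ :=
  (|y + w| ^ p - |x| ^ p) * (if x - y ≤ w ∧ w ≤ 0 then (1:ℝ) else 0)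
    + (|x - w| ^ p - |y| ^ p) * (if 0 ≤ w ∧ w ≤ x - y then (1:ℝ) else 0)

/-- `φ_p(w) = ∫_{ℝ²} Ψ_{|·|^p}(x,y,w) (2π)⁻¹ e^{-(x²+y²)/2} dx dy`. -/
noncomputable def phiP (p : ℕ) (w : ℝ) : ℝ :=
  ∫ q : ℝ × ℝ,
    PsiAbsPow p q.1 q.2 w * ((1 / (2 * π)) * Real.exp (-(q.1 ^ 2 + q.2 ^ 2) / 2))

noncomputable def wt (q : ℝ × ℝ) : ℝ := (1 / (2 * π)) * Real.exp (-(q.1 ^ 2 + q.2 ^ 2) / 2)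

lemma wt_pos (q : ℝ × ℝ) : 0 < wt q := by
  unfold wt
  positivity

lemma psi_abs_le (p : ℕ) (x y w : ℝ) :
    |PsiAbsPow p x y w| ≤
      (Icc (-(|x| + |y|)) (|x| + |y|)).indicator
        (fun _ => 4 * (2 * (|x| + |y|)) ^ p) w := by
  set r : ℝ := |x| + |y| with hr
  have hr0 : 0 ≤ r := by positivity
  by_cases hw : w ∈ Icc (-r) r
  · rw [Set.indicator_of_mem hw]
    obtain ⟨hw1, hw2⟩ := hw
    set M : ℝ := (2 * r) ^ p with hM
    have h1 : |y + w| ^ p ≤ M := by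
      apply pow_le_pow_left₀ (abs_nonneg _)
      calc |y + w| ≤ |y| + |w| := abs_add_le _ _
        _ ≤ 2 * r := by have := abs_le.2 ⟨hw1, hw2⟩; simp only [hr] at *; nlinarith [abs_nonneg x]
    have h2 : |x| ^ p ≤ M := by
      apply pow_le_pow_left₀ (abs_nonneg _)
      simp only [hr] at *; nlinarith [abs_nonneg y]
    have h3 : |x - w| ^ p ≤ M := by
      apply pow_le_pow_left₀ (abs_nonneg _)
      calc |x - w| ≤ |x| + |w| := abs_sub _ _
        _ ≤ 2 * r := by have := abs_le.2 ⟨hw1, hw2⟩; simp only [hr] at *; nlinarith [abs_nonneg y]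
    have h4 : |y| ^ p ≤ M := by
      apply pow_le_pow_left₀ (abs_nonneg _)
      simp only [hr] at *; nlinarith [abs_nonneg x]
    have p1 : (0:ℝ) ≤ |y + w| ^ p := by positivity
    have p2 : (0:ℝ) ≤ |x| ^ p := by positivity
    have p3 : (0:ℝ) ≤ |x - w| ^ p := by positivity
    have p4 : (0:ℝ) ≤ |y| ^ p := by positivity
    unfold PsiAbsPow
    rw [abs_le]
    constructor <;> split_ifs <;> nlinarith
  · rw [Set.indicator_of_notMem hw]
    have hxy : |x - y| ≤ r := abs_sub _ _
    rw [Set.mem_Icc, not_and_or] at hw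
    have hc1 : ¬(x - y ≤ w ∧ w ≤ 0) := by
      rintro ⟨ha, hb⟩
      have := neg_abs_le (x - y)
      rcases hw with h | h <;> push_neg at h <;> linarith
    have hc2 : ¬(0 ≤ w ∧ w ≤ x - y) := by
      rintro ⟨ha, hb⟩
      have := le_abs_self (x - y)
      rcases hw with h | h <;> push_neg at h <;> linarith
    unfold PsiAbsPow
    rw [if_neg hc1, if_neg hc2]
    simp

lemma one_add_abs_pow_integrable (n : ℕ) :
    Integrable (fun t : ℝ => (1 + |t|) ^ n * Real.exp (-t ^ 2 / 2)) := by
  have habs : Integrable (fun t : ℝ => |t| ^ n * Real.exp (-(1/2) * t ^ 2)) := by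
    have h := (integrable_rpow_mul_exp_neg_mul_sq (b := (1:ℝ)/2) (by norm_num)
      (s := (n : ℝ)) (lt_of_lt_of_le (by norm_num) (Nat.cast_nonneg n))).abs
    refine h.congr (Filter.Eventually.of_forall fun t => ?_)
    simp [Real.rpow_natCast, abs_mul, abs_pow, Real.abs_exp]
  have hexp : Integrable (fun t : ℝ => Real.exp (-(1/2) * t ^ 2)) :=
    integrable_exp_neg_mul_sq (by norm_num)
  have hdom : Integrable
      (fun t : ℝ => (2:ℝ) ^ n * Real.exp (-(1/2) * t ^ 2)
        + (2:ℝ) ^ n * (|t| ^ n * Real.exp (-(1/2) * t ^ 2))) :=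
    (hexp.const_mul _).add (habs.const_mul _)
  refine hdom.mono' ?_ (Filter.Eventually.of_forall fun t => ?_)
  · apply Measurable.aestronglyMeasurable
    exact ((measurable_const.add measurable_abs).pow_const n).mul
      ((measurable_id.pow_const 2).neg.div_const 2).exp
  · have he : (0:ℝ) < Real.exp (-t ^ 2 / 2) := Real.exp_pos _
    have heq : Real.exp (-(1/2) * t ^ 2) = Real.exp (-t ^ 2 / 2) := by ring_nf
    rw [Real.norm_eq_abs, abs_of_nonneg (by positivity), heq]
    have key : (1 + |t|) ^ n ≤ 2 ^ n + 2 ^ n * |t| ^ n := by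
      rcases le_total (|t|) 1 with h | h
      · calc (1 + |t|) ^ n ≤ 2 ^ n := by
              apply pow_le_pow_left₀ (by positivity); linarith
          _ ≤ 2 ^ n + 2 ^ n * |t| ^ n := le_add_of_nonneg_right (by positivity)
      · calc (1 + |t|) ^ n ≤ (2 * |t|) ^ n := by
              apply pow_le_pow_left₀ (by positivity); linarith
          _ = 2 ^ n * |t| ^ n := mul_pow _ _ _
          _ ≤ 2 ^ n + 2 ^ n * |t| ^ n := le_add_of_nonneg_left (by positivity)
    nlinarith

theorem phiP_integrable (p : ℕ) (hp : 1 ≤ p) :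
    MeasureTheory.Integrable (phiP p) := by
  classical
  set F : (ℝ × ℝ) × ℝ → ℝ := fun a => PsiAbsPow p a.1.1 a.1.2 a.2 * wt a.1 with hF
  have hFmeas : Measurable F := by
    have h1 : MeasurableSet {a : (ℝ × ℝ) × ℝ | a.1.1 - a.1.2 ≤ a.2 ∧ a.2 ≤ 0} := by
      apply MeasurableSet.inter
      · exact measurableSet_le ((measurable_fst.fst).sub (measurable_fst.snd)) measurable_snd
      · exact measurableSet_le measurable_snd measurable_const
    have h2 : MeasurableSet {a : (ℝ × ℝ) × ℝ | 0 ≤ a.2 ∧ a.2 ≤ a.1.1 - a.1.2} := by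
      apply MeasurableSet.inter
      · exact measurableSet_le measurable_const measurable_snd
      · exact measurableSet_le measurable_snd ((measurable_fst.fst).sub (measurable_fst.snd))
    have m1 : Measurable fun a : (ℝ × ℝ) × ℝ =>
        (|a.1.2 + a.2| ^ p - |a.1.1| ^ p) *
          (if a.1.1 - a.1.2 ≤ a.2 ∧ a.2 ≤ 0 then (1:ℝ) else 0) :=
      (((measurable_fst.snd.add measurable_snd).abs.pow_const p).sub
        (measurable_fst.fst.abs.pow_const p)).mul
        (Measurable.ite h1 measurable_const measurable_const)
    have m2 : Measurable fun a : (ℝ × ℝ) × ℝ =>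
        (|a.1.1 - a.2| ^ p - |a.1.2| ^ p) *
          (if 0 ≤ a.2 ∧ a.2 ≤ a.1.1 - a.1.2 then (1:ℝ) else 0) :=
      (((measurable_fst.fst.sub measurable_snd).abs.pow_const p).sub
        (measurable_fst.snd.abs.pow_const p)).mul
        (Measurable.ite h2 measurable_const measurable_const)
    have mw : Measurable fun a : (ℝ × ℝ) × ℝ => wt a.1 := by
      unfold wt
      exact (measurable_const.mul
        ((((measurable_fst.fst.pow_const 2).add (measurable_fst.snd.pow_const 2)).neg.div_const
          2).exp))
    exact (m1.add m2).mul mw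
  set r : ℝ × ℝ → ℝ := fun q => |q.1| + |q.2| with hrdef
  have hr0 : ∀ q, 0 ≤ r q := fun q => by positivity
  have hbound : ∀ q w, ‖F (q, w)‖ ≤
      (Icc (-(r q)) (r q)).indicator (fun _ => 4 * (2 * r q) ^ p * wt q) w := by
    intro q w
    have hb := psi_abs_le p q.1 q.2 w
    have hwtp := wt_pos q
    rw [Real.norm_eq_abs, hF]
    simp only [abs_mul, abs_of_pos hwtp]
    by_cases hw : w ∈ Icc (-(r q)) (r q)
    · rw [Set.indicator_of_mem hw] at hb ⊢
      exact mul_le_mul_of_nonneg_right hb hwtp.le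
    · rw [Set.indicator_of_notMem hw] at hb ⊢
      have : |PsiAbsPow p q.1 q.2 w| = 0 := le_antisymm hb (abs_nonneg _)
      rw [this, zero_mul]
  have hgint : ∀ q : ℝ × ℝ, Integrable ((Icc (-(r q)) (r q)).indicator
      (fun _ => 4 * (2 * r q) ^ p * wt q)) := by
    intro q
    rw [integrable_indicator_iff measurableSet_Icc]
    exact integrableOn_const measure_Icc_lt_top.ne
  have hinner : ∀ q : ℝ × ℝ, Integrable (fun w => F (q, w)) :=
    fun q => (hgint q).mono'
      (hFmeas.comp measurable_prodMk_left).aestronglyMeasurable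
      (Filter.Eventually.of_forall fun w => hbound q w)
  have key : Integrable F ((volume : Measure (ℝ × ℝ)).prod (volume : Measure ℝ)) := by
    rw [integrable_prod_iff hFmeas.aestronglyMeasurable]
    refine ⟨Filter.Eventually.of_forall hinner, ?_⟩
    set G : ℝ × ℝ → ℝ := fun q => (2 * r q) * (4 * (2 * r q) ^ p * wt q) with hG
    have hGint : Integrable G := by
      set h1 : ℝ → ℝ := fun t => (1 + |t|) ^ (p + 1) * Real.exp (-t ^ 2 / 2) with hh1
      have hh1i : Integrable h1 := one_add_abs_pow_integrable (p + 1)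
      have hprod : Integrable (fun q : ℝ × ℝ =>
          (8 * 2 ^ (p + 1) * (1 / (2 * π))) * (h1 q.1 * h1 q.2)) := by
        have := (hh1i.mul_prod hh1i).const_mul (8 * 2 ^ (p + 1) * (1 / (2 * π)))
        rwa [← Measure.volume_eq_prod] at this
      refine hprod.mono' ?_ (Filter.Eventually.of_forall fun q => ?_)
      · apply Measurable.aestronglyMeasurable
        have mr : Measurable r := (measurable_fst.abs.add measurable_snd.abs)
        have mw : Measurable wt := by
          unfold wt
          exact measurable_const.mul
            (((measurable_fst.pow_const 2).add (measurable_snd.pow_const 2)).neg.div_const 2).exp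
        exact ((mr.const_mul 2).mul
          (((mr.const_mul 2).pow_const p).const_mul 4 |>.mul mw))
      · obtain ⟨x, y⟩ := q
        have hwtp := wt_pos (x, y)
        simp only [hG, hh1, Real.norm_eq_abs]
        have hr0' : (0:ℝ) ≤ |x| + |y| := by positivity
        have hrq : (0:ℝ) ≤ r (x, y) := hr0 (x, y)
        have hGnn : (0:ℝ) ≤ 2 * r (x, y) * (4 * (2 * r (x, y)) ^ p * wt (x, y)) := by
          have hpw : (0:ℝ) ≤ (2 * r (x, y)) ^ p := pow_nonneg (by linarith) p
          have h2 : (0:ℝ) ≤ 2 * r (x, y) := by linarith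
          exact mul_nonneg h2 (mul_nonneg (by linarith) hwtp.le)
        rw [abs_of_nonneg hGnn]
        -- key inequality
        have hD : 2 * r (x, y) ≤ 2 * ((1 + |x|) * (1 + |y|)) := by
          simp only [hrdef]
          nlinarith [abs_nonneg x, abs_nonneg y, mul_nonneg (abs_nonneg x) (abs_nonneg y)]
        have hDnn : (0:ℝ) ≤ (1 + |x|) * (1 + |y|) := by positivity
        have hpow : (2 * r (x, y)) ^ (p + 1) ≤ (2 * ((1 + |x|) * (1 + |y|))) ^ (p + 1) := by
          apply pow_le_pow_left₀ (by simp only [hrdef]; positivity) hD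
        have hwteq : wt (x, y) = (1 / (2 * π)) * (Real.exp (-x ^ 2 / 2) * Real.exp (-y ^ 2 / 2)) := by
          unfold wt
          rw [← Real.exp_add]
          ring_nf
        have hstep : 2 * r (x, y) * (4 * (2 * r (x, y)) ^ p * wt (x, y))
            = 4 * (2 * r (x, y)) ^ (p + 1) * wt (x, y) := by
          rw [pow_succ]; ring
        rw [hstep, hwteq]
        have hexpnn : (0:ℝ) ≤ Real.exp (-x ^ 2 / 2) * Real.exp (-y ^ 2 / 2) := by positivity
        have hpi : (0:ℝ) < 1 / (2 * π) := by positivity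
        calc 4 * (2 * r (x, y)) ^ (p + 1) *
              ((1 / (2 * π)) * (Real.exp (-x ^ 2 / 2) * Real.exp (-y ^ 2 / 2)))
            ≤ 4 * (2 * ((1 + |x|) * (1 + |y|))) ^ (p + 1) *
              ((1 / (2 * π)) * (Real.exp (-x ^ 2 / 2) * Real.exp (-y ^ 2 / 2))) := by
              apply mul_le_mul_of_nonneg_right _ (by positivity)
              nlinarith
          _ = 8 * 2 ^ (p + 1) * (1 / (2 * π)) *
              ((1 + |x|) ^ (p + 1) * Real.exp (-x ^ 2 / 2) *
                ((1 + |y|) ^ (p + 1) * Real.exp (-y ^ 2 / 2))) / 2 := by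
              rw [mul_pow, mul_pow]; ring
          _ ≤ 8 * 2 ^ (p + 1) * (1 / (2 * π)) *
              ((1 + |x|) ^ (p + 1) * Real.exp (-x ^ 2 / 2) *
                ((1 + |y|) ^ (p + 1) * Real.exp (-y ^ 2 / 2))) := by
              have hnn : (0:ℝ) ≤ 8 * 2 ^ (p + 1) * (1 / (2 * π)) *
                  ((1 + |x|) ^ (p + 1) * Real.exp (-x ^ 2 / 2) *
                    ((1 + |y|) ^ (p + 1) * Real.exp (-y ^ 2 / 2))) := by positivity
              linarith
    refine hGint.mono' hFmeas.norm.aestronglyMeasurable.integral_prod_right'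
      (Filter.Eventually.of_forall fun q => ?_)
    have hFn : Integrable (fun w => ‖F (q, w)‖) := (hinner q).norm
    have h1 : ∫ w, ‖F (q, w)‖ ≤ ∫ w, (Icc (-(r q)) (r q)).indicator
        (fun _ => 4 * (2 * r q) ^ p * wt q) w :=
      integral_mono hFn (hgint q) (hbound q)
    have h2 : ∫ w, (Icc (-(r q)) (r q)).indicator
        (fun _ => 4 * (2 * r q) ^ p * wt q) w = (2 * r q) * (4 * (2 * r q) ^ p * wt q) := by
      rw [integral_indicator_const _ measurableSet_Icc, Real.volume_real_Icc_of_le (by linarith [hr0 q]),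
        smul_eq_mul]
      ring_nf
    have h3 : (0:ℝ) ≤ ∫ w, ‖F (q, w)‖ := integral_nonneg fun w => norm_nonneg _
    rw [Real.norm_eq_abs, abs_of_nonneg h3]
    rw [h2] at h1
    exact h1
  have hphi : phiP p = fun w => ∫ q : ℝ × ℝ, F (q, w) := by
    funext w; rfl
  rw [hphi]
  exact key.integral_prod_right
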